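/- Every order-embedding defined on a finite subset of the rationals extends to an order-automorphism of ℚ. Precisely: if S ⊆ ℚ is finite and f : S → ℚ satisfies (x < y ↔ f x < f y) for all x, y ∈ S, then there exists an order-automorphism α of ℚ (a bijection ℚ → ℚ with x < y ↔ α x < α y) such that α x = f x for all x ∈ S. -/

import Mathlib

/-- A strictly monotone surjection of ℚ. -/
def SMS (g : ℚ → ℚ) : Prop := StrictMono g ∧ Function.Surjective g

lemma sms_id : SMS (fun x : ℚ => x) := ⟨fun _ _ h => h, fun z => ⟨z, rfl⟩⟩

lemma sms_comp {g h : ℚ → ℚ} (hg : SMS g) (hh : SMS h) : SMS (g ∘ h) :=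
  ⟨hg.1.comp hh.1, hg.2.comp hh.2⟩

lemma sms_trans : ∀ c : ℚ, SMS (fun x : ℚ => x + c) := by
  intro c
  refine ⟨fun x y h => by simpa using h, fun z => ⟨z - c, by ring⟩⟩

lemma sms_aff (c e : ℚ) (hc : 0 < c) : SMS (fun x : ℚ => c * (x - e) + e) := by
  constructor
  · intro x y h
    have := mul_lt_mul_of_pos_left (sub_lt_sub_right h e) hc
    dsimp only
    linarith
  · intro z
    refine ⟨(z - e) / c + e, ?_⟩
    dsimp only
    field_simp
    ring

lemma sms_glue {u v : ℚ → ℚ} {p : ℚ} (hu : SMS u) (hv : SMS v) (h : u p = v p) :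
    SMS (fun x => if x ≤ p then u x else v x) := by
  constructor
  · intro x y hxy
    by_cases hx : x ≤ p <;> by_cases hy : y ≤ p <;> simp only [hx, hy, if_true, if_false]
    · exact hu.1 hxy
    · have h1 : u x ≤ u p := hu.1.le_iff_le.mpr hx
      have h2 : v p < v y := hv.1 (lt_of_not_ge hy)
      rw [h] at h1; linarith
    · exact absurd (le_trans hxy.le hy) hx
    · exact hv.1 hxy
  · intro z
    by_cases hz : z ≤ u p
    · obtain ⟨x, hx⟩ := hu.2 z
      have hxp : x ≤ p := hu.1.le_iff_le.mp (by rw [hx]; exact hz)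
      exact ⟨x, by simp [hxp, hx]⟩
    · obtain ⟨x, hx⟩ := hv.2 z
      have hxp : ¬ x ≤ p := by
        intro hle
        apply hz
        rw [← hx, h]
        exact hv.1.le_iff_le.mpr hle
      exact ⟨x, by simp [hxp, hx]⟩

lemma left_piece (A : Finset ℚ) (p q : ℚ) (hA : ∀ t ∈ A, t < p ∧ t < q) :
    ∃ L : ℚ → ℚ, SMS L ∧ L p = q ∧ ∀ t ∈ A, L t = t := by
  rcases A.eq_empty_or_nonempty with h | h
  · exact ⟨fun x => x + (q - p), sms_trans _, by ring, by simp [h]⟩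
  · set a := A.max' h with haa
    have hap : a < p := (hA a (A.max'_mem h)).1
    have haq : a < q := (hA a (A.max'_mem h)).2
    set c : ℚ := (q - a) / (p - a) with hc
    have hcpos : 0 < c := div_pos (by linarith) (by linarith)
    set aff : ℚ → ℚ := fun x => c * (x - a) + a with haff
    have haffa : (fun x : ℚ => x) a = aff a := by simp [haff]
    refine ⟨fun x => if x ≤ a then x else aff x,
      sms_glue sms_id (sms_aff c a hcpos) haffa, ?_, ?_⟩
    · have hnl : ¬ p ≤ a := not_le.mpr hap
      simp only [hnl, if_false, haff, hc]
      have hne : p - a ≠ 0 := by intro hh; apply absurd hap; linarith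
      have h1 : (q - a) / (p - a) * (p - a) = q - a := div_mul_cancel₀ _ hne
      linarith
    · intro t ht
      have hta : t ≤ a := A.le_max' t ht
      simp [hta]

lemma right_piece (B : Finset ℚ) (p q : ℚ) (hB : ∀ t ∈ B, p < t ∧ q < t) :
    ∃ R : ℚ → ℚ, SMS R ∧ R p = q ∧ ∀ t ∈ B, R t = t := by
  rcases B.eq_empty_or_nonempty with h | h
  · exact ⟨fun x => x + (q - p), sms_trans _, by ring, by simp [h]⟩
  · set b := B.min' h with hbb
    have hbp : p < b := (hB b (B.min'_mem h)).1
    have hbq : q < b := (hB b (B.min'_mem h)).2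
    set c : ℚ := (b - q) / (b - p) with hc
    have hcpos : 0 < c := div_pos (by linarith) (by linarith)
    set aff : ℚ → ℚ := fun x => c * (x - b) + b with haff
    have haffb : aff b = (fun x : ℚ => x) b := by simp [haff]
    refine ⟨fun x => if x ≤ b then aff x else x,
      sms_glue (sms_aff c b hcpos) sms_id haffb, ?_, ?_⟩
    · simp only [hbp.le, if_true, haff, hc]
      have hne : b - p ≠ 0 := by intro hh; apply absurd hbp; linarith
      have h1 : (b - q) / (b - p) * (b - p) = b - q := div_mul_cancel₀ _ hne
      have h2 : (b - q) / (b - p) * (p - b) = -((b - q) / (b - p) * (b - p)) := by ring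
      linarith
    · intro t ht
      rcases eq_or_lt_of_le (B.min'_le t ht) with he | hlt
      · rw [← hbb] at he
        simp [← he, haff]
      · rw [← hbb] at hlt
        simp [not_le.mpr hlt]

lemma gap (T : Finset ℚ) (p q : ℚ)
    (h : ∀ t ∈ T, (t < p ↔ t < q) ∧ (p < t ↔ q < t)) :
    ∃ γ : ℚ → ℚ, SMS γ ∧ γ p = q ∧ ∀ t ∈ T, γ t = t := by
  by_cases hpq : p = q
  · exact ⟨fun x => x, sms_id, hpq, fun _ _ => rfl⟩
  · have hside : ∀ t ∈ T, t < p ∨ p < t := by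
      intro t ht
      rcases lt_trichotomy t p with h1 | h1 | h1
      · exact Or.inl h1
      · exfalso
        subst h1
        have h2 := (h t ht).1
        have h3 := (h t ht).2
        exact hpq (le_antisymm (not_lt.mp (fun hq => (lt_irrefl t) ((h3.mpr hq))))
          (not_lt.mp (fun hq => (lt_irrefl t) ((h2.mpr hq)))))
      · exact Or.inr h1
    obtain ⟨L, hL, hLp, hLfix⟩ := left_piece (T.filter (· < p)) p q (by
      intro t ht
      rw [Finset.mem_filter] at ht
      exact ⟨ht.2, ((h t ht.1).1).mp ht.2⟩)
    obtain ⟨R, hR, hRp, hRfix⟩ := right_piece (T.filter (p < ·)) p q (by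
      intro t ht
      rw [Finset.mem_filter] at ht
      exact ⟨ht.2, ((h t ht.1).2).mp ht.2⟩)
    refine ⟨fun x => if x ≤ p then L x else R x,
      sms_glue hL hR (hLp.trans hRp.symm), by simp [hLp], ?_⟩
    intro t ht
    rcases hside t ht with h1 | h1
    · simpa [h1.le] using hLfix t (Finset.mem_filter.mpr ⟨ht, h1⟩)
    · simpa [not_le.mpr h1] using hRfix t (Finset.mem_filter.mpr ⟨ht, h1⟩)

lemma key (S : Finset ℚ) (f : ℚ → ℚ) :
    (∀ x ∈ S, ∀ y ∈ S, (x < y ↔ f x < f y)) →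
    ∃ α : ℚ → ℚ, SMS α ∧ ∀ x ∈ S, α x = f x := by
  induction S using Finset.induction_on with
  | empty => exact fun _ => ⟨fun x => x, sms_id, by simp⟩
  | @insert a S haS ih =>
    intro hf
    obtain ⟨α, hα, hαf⟩ := ih (fun x hx y hy =>
      hf x (Finset.mem_insert_of_mem hx) y (Finset.mem_insert_of_mem hy))
    have ha' := Finset.mem_insert_self a S
    obtain ⟨γ, hγ, hγp, hγfix⟩ := gap (S.image α) (α a) (f a) (by
      intro t ht
      rw [Finset.mem_image] at ht
      obtain ⟨s, hs, rfl⟩ := ht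
      have hs' : s ∈ insert a S := Finset.mem_insert_of_mem hs
      have h1 : α s < α a ↔ s < a := hα.1.lt_iff_lt
      have h2 : α a < α s ↔ a < s := hα.1.lt_iff_lt
      have h3 : α s = f s := hαf s hs
      constructor
      · rw [h1, hf s hs' a ha', h3]
      · rw [h2, hf a ha' s hs', h3])
    refine ⟨γ ∘ α, sms_comp hγ hα, ?_⟩
    intro x hx
    rcases Finset.mem_insert.mp hx with rfl | hx'
    · exact hγp
    · have hfix : γ (α x) = α x := hγfix (α x) (Finset.mem_image_of_mem α hx')
      exact hfix.trans (hαf x hx')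

theorem homogeneity_of_Q (S : Finset ℚ) (f : ℚ → ℚ)
    (hf : ∀ x ∈ S, ∀ y ∈ S, (x < y ↔ f x < f y)) :
    ∃ α : ℚ → ℚ, Function.Bijective α ∧ (∀ x y : ℚ, x < y ↔ α x < α y) ∧
      ∀ x ∈ S, α x = f x := by
  obtain ⟨α, ⟨hmono, hsurj⟩, hfix⟩ := key S f hf
  exact ⟨α, ⟨hmono.injective, hsurj⟩, fun x y => hmono.lt_iff_lt.symm, hfix⟩
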